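/- Extending a truncated Gröbner basis by one element: let the grading given by W be positive, let σ be a term ordering on ℕ^n, let D ∈ ℤ^m, and let g_1,…,g_s ∈ P be nonzero W-homogeneous polynomials, g_k of W-degree d_k, generating an ideal I and forming a D-truncated σ-Gröbner basis in the sense that for every nonzero W-homogeneous v ∈ I with deg_W(v) ≤_Lex D there is k with d_k ≤_Lex D and deg_σ(g_k) ≤ deg_σ(v) componentwise. Let g_{s+1} ∈ P be a nonzero W-homogeneous polynomial of W-degree exactly D such that no deg_σ(g_k) (1 ≤ k ≤ s) divides deg_σ(g_{s+1}) componentwise. Then g_1,…,g_{s+1} form a D-truncated σ-Gröbner basis of I + (g_{s+1}): for every nonzero W-homogeneous v ∈ I + (g_{s+1}) with deg_W(v) ≤_Lex D there is k ∈ {1,…,s+1} whose W-degree is ≤_Lex D and with deg_σ(g_k) ≤ deg_σ(v) componentwise. -/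

import Mathlib

open MvPolynomial

/-- The `W`-degree of an exponent vector `α ∈ ℕ^n`: `W·α = ∑ⱼ αⱼ w⁽ʲ⁾ ∈ ℤ^m`. -/
def wdeg {m n : ℕ} (W : Matrix (Fin m) (Fin n) ℤ) (α : Fin n →₀ ℕ) : Fin m → ℤ :=
  fun i => ∑ j, (α j : ℤ) * W i j

/-- A polynomial is `W`-homogeneous of degree `d ∈ ℤ^m` if every monomial in its support
has `W`-degree `d`. -/
def IsWHomogeneous {K : Type*} [CommSemiring K] {m n : ℕ} (W : Matrix (Fin m) (Fin n) ℤ)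
    (p : MvPolynomial (Fin n) K) (d : Fin m → ℤ) : Prop :=
  ∀ α ∈ p.support, wdeg W α = d

/-- The grading given by `W` is positive: the rows of `W` are `ℤ`-linearly independent,
no column of `W` is zero, and the first non-zero entry of each column of `W` is positive. -/
def PositiveGrading {m n : ℕ} (W : Matrix (Fin m) (Fin n) ℤ) : Prop :=
  LinearIndependent ℤ (fun i : Fin m => (fun j => W i j : Fin n → ℤ)) ∧
  (∀ j : Fin n, ∃ i : Fin m, W i j ≠ 0) ∧
  (∀ j : Fin n, ∃ i : Fin m, 0 < W i j ∧ ∀ i' < i, W i' j = 0)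

/-- The `σ`-degree (exponent of the `σ`-leading term) of a polynomial: the `σ`-largest
exponent vector in its support. -/
noncomputable def mdeg {K : Type*} [CommSemiring K] {n : ℕ} (σ : MonomialOrder (Fin n))
    (f : MvPolynomial (Fin n) K) : Fin n →₀ ℕ :=
  σ.toSyn.symm (f.support.sup fun α => σ.toSyn α)

/-! ### Auxiliary lemmas about `mdeg` -/

section mdeg
variable {K : Type*} [CommSemiring K] {n : ℕ} (σ : MonomialOrder (Fin n))

lemma toSyn_mdeg (f : MvPolynomial (Fin n) K) :
    σ.toSyn (mdeg σ f) = f.support.sup fun α => σ.toSyn α := by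
  simp [mdeg]

lemma mdeg_mem {f : MvPolynomial (Fin n) K} (hf : f ≠ 0) : mdeg σ f ∈ f.support := by
  have hne : f.support.Nonempty := support_nonempty.mpr hf
  obtain ⟨α, hα, hα2⟩ := Finset.exists_mem_eq_sup f.support hne fun α => σ.toSyn α
  have : mdeg σ f = α := by simp [mdeg, hα2]
  rwa [this]

lemma le_mdeg {f : MvPolynomial (Fin n) K} {α : Fin n →₀ ℕ} (hα : α ∈ f.support) :
    σ.toSyn α ≤ σ.toSyn (mdeg σ f) := by
  rw [toSyn_mdeg]; exact Finset.le_sup hα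

lemma mdeg_add_of_lt {a b : MvPolynomial (Fin n) K} (ha : a ≠ 0)
    (hlt : σ.toSyn (mdeg σ b) < σ.toSyn (mdeg σ a)) : mdeg σ (a + b) = mdeg σ a := by
  have hb0 : coeff (mdeg σ a) b = 0 := by
    by_contra hc
    exact absurd (le_mdeg σ (mem_support_iff.mpr hc)) (not_le.mpr hlt)
  have hmem : mdeg σ a ∈ (a + b).support := by
    rw [mem_support_iff, coeff_add, hb0, add_zero]
    exact mem_support_iff.mp (mdeg_mem σ ha)
  apply σ.toSyn.injective
  apply le_antisymm
  · rw [toSyn_mdeg σ (a + b)]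
    apply Finset.sup_le
    intro α hα
    rcases Finset.mem_union.mp (MvPolynomial.support_add hα) with h | h
    · exact le_mdeg σ h
    · exact le_of_lt (lt_of_le_of_lt (le_mdeg σ h) hlt)
  · exact le_mdeg σ hmem

end mdeg

lemma mdeg_C_mul {K : Type*} [Field K] {n : ℕ} (σ : MonomialOrder (Fin n))
    {c : K} (hc : c ≠ 0) (f : MvPolynomial (Fin n) K) :
    mdeg σ (C c * f) = mdeg σ f := by
  have : (C c * f).support = f.support := by
    rw [← smul_eq_C_mul]
    exact MvPolynomial.support_smul_eq hc f
  simp [mdeg, this]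

/-! ### Weighted homogeneous components and products -/

section comp
variable {K : Type*} [CommSemiring K] {n m : ℕ} (w : Fin n → (Fin m → ℤ))

lemma wcomp_mul {p : MvPolynomial (Fin n) K} {dp : Fin m → ℤ}
    (hp : p.IsWeightedHomogeneous w dp) (q : MvPolynomial (Fin n) K) (e : Fin m → ℤ) :
    weightedHomogeneousComponent w e (q * p) =
      (weightedHomogeneousComponent w (e - dp) q) * p := by
  classical
  ext β
  rw [coeff_weightedHomogeneousComponent, coeff_mul, coeff_mul]
  by_cases hβ : (Finsupp.weight w) β = e
  · rw [if_pos hβ]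
    apply Finset.sum_congr rfl
    rintro ⟨β1, β2⟩ hmem
    rw [coeff_weightedHomogeneousComponent]
    by_cases hp2 : coeff β2 p = 0
    · simp [hp2]
    · have hw2 : (Finsupp.weight w) β2 = dp := hp hp2
      have hadd : β1 + β2 = β := Finset.HasAntidiagonal.mem_antidiagonal.mp hmem
      have : (Finsupp.weight w) β1 = e - dp := by
        rw [eq_sub_iff_add_eq, ← hw2, ← map_add, hadd, hβ]
      rw [if_pos this]
  · rw [if_neg hβ]
    symm
    apply Finset.sum_eq_zero
    rintro ⟨β1, β2⟩ hmem
    rw [coeff_weightedHomogeneousComponent]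
    by_cases hp2 : coeff β2 p = 0
    · simp [hp2]
    · have hw2 : (Finsupp.weight w) β2 = dp := hp hp2
      have hadd : β1 + β2 = β := Finset.HasAntidiagonal.mem_antidiagonal.mp hmem
      have : (Finsupp.weight w) β1 ≠ e - dp := by
        intro hc
        apply hβ
        rw [← hadd, map_add, hc, hw2, sub_add_cancel]
      rw [if_neg this, zero_mul]

end comp

section wdegweight
variable {m n : ℕ} (W : Matrix (Fin m) (Fin n) ℤ)

lemma wdeg_eq (α : Fin n →₀ ℕ) :
    wdeg W α = Finsupp.weight (fun j => fun i => W i j) α := by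
  rw [Finsupp.weight_apply, Finsupp.sum_fintype]
  · funext i
    simp [wdeg, Finset.sum_apply, mul_comm]
  · intro j; simp

lemma wdeg_sum (α : Fin n →₀ ℕ) :
    wdeg W α = ∑ j, (α j) • (fun i => W i j) := by
  funext i
  simp [wdeg, Finset.sum_apply, mul_comm]

end wdegweight

/-! ### Positivity of the grading, by hand on the lexicographic order -/

section pos
variable {m : ℕ}

lemma lex_add_lt_add_left {x y : Fin m → ℤ} (hxy : toLex x < toLex y) (z : Fin m → ℤ) :
    toLex (z + x) < toLex (z + y) := by
  obtain ⟨i, h1, h2⟩ := hxy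
  refine ⟨i, fun j hj => ?_, ?_⟩
  · show z j + x j = z j + y j
    rw [show x j = y j from h1 j hj]
  · show z i + x i < z i + y i
    exact (add_lt_add_iff_left (z i)).mpr h2

lemma lex_add_le_add_left {x y : Fin m → ℤ} (hxy : toLex x ≤ toLex y) (z : Fin m → ℤ) :
    toLex (z + x) ≤ toLex (z + y) := by
  rcases lt_or_eq_of_le hxy with hlt | heq
  · exact le_of_lt (lex_add_lt_add_left hlt z)
  · exact le_of_eq (congrArg _ (by rw [toLex.injective heq]))

lemma lex_add_pos {x y : Fin m → ℤ} (hx : toLex 0 < toLex x) (hy : toLex 0 ≤ toLex y) :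
    toLex 0 < toLex (x + y) := by
  have := lex_add_le_add_left hy x
  rw [add_zero] at this
  exact lt_of_lt_of_le hx this

lemma lex_nsmul_nonneg {c : Fin m → ℤ} (hc : toLex 0 < toLex c) (k : ℕ) :
    toLex 0 ≤ toLex (k • c) := by
  induction k with
  | zero => simp
  | succ k ih =>
    rw [succ_nsmul, add_comm]
    exact le_of_lt (lex_add_pos hc ih)

lemma lex_nsmul_pos {c : Fin m → ℤ} (hc : toLex 0 < toLex c) {k : ℕ} (hk : k ≠ 0) :
    toLex 0 < toLex (k • c) := by
  obtain ⟨l, rfl⟩ := Nat.exists_eq_succ_of_ne_zero hk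
  rw [succ_nsmul, add_comm]
  exact lex_add_pos hc (lex_nsmul_nonneg hc l)

variable {n : ℕ} {W : Matrix (Fin m) (Fin n) ℤ}

lemma col_pos (hW : ∀ j : Fin n, ∃ i : Fin m, 0 < W i j ∧ ∀ i' < i, W i' j = 0)
    (j : Fin n) : toLex (0 : Fin m → ℤ) < toLex (fun i => W i j) := by
  obtain ⟨i, hpos, hzero⟩ := hW j
  exact ⟨i, fun i' hi' => (hzero i' hi').symm, hpos⟩

lemma lex_sum_key (hW : ∀ j : Fin n, ∃ i : Fin m, 0 < W i j ∧ ∀ i' < i, W i' j = 0)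
    (α : Fin n → ℕ) (s : Finset (Fin n)) :
    (∀ j ∈ s, α j = 0) ∨
      toLex (0 : Fin m → ℤ) < toLex (∑ j ∈ s, (α j) • (fun i => W i j)) := by
  classical
  induction s using Finset.induction with
  | empty => exact Or.inl (by simp)
  | insert j s hj ih =>
    rw [Finset.sum_insert hj]
    rcases ih with hall | hpos
    · by_cases hαj : α j = 0
      · left
        intro j' hj'
        rcases Finset.mem_insert.mp hj' with rfl | h
        · exact hαj
        · exact hall j' h
      · right
        have hsum0 : (∑ j' ∈ s, (α j') • (fun i => W i j')) = 0 := by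
          apply Finset.sum_eq_zero
          intro j' hj'
          rw [hall j' hj', zero_smul]
        rw [hsum0, add_zero]
        exact lex_nsmul_pos (col_pos hW j) hαj
    · right
      by_cases hαj : α j = 0
      · rw [hαj, zero_smul, zero_add]
        exact hpos
      · exact lex_add_pos (lex_nsmul_pos (col_pos hW j) hαj) (le_of_lt hpos)

lemma wdeg_lex_nonneg (hW : ∀ j : Fin n, ∃ i : Fin m, 0 < W i j ∧ ∀ i' < i, W i' j = 0)
    (α : Fin n →₀ ℕ) : toLex (0 : Fin m → ℤ) ≤ toLex (wdeg W α) := by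
  rw [wdeg_sum]
  rcases lex_sum_key hW (fun j => α j) Finset.univ with hall | hpos
  · apply le_of_eq
    congr 1
    symm
    apply Finset.sum_eq_zero
    intro j hj
    rw [hall j hj, zero_smul]
  · exact le_of_lt hpos

lemma wdeg_lex_eq_zero (hW : ∀ j : Fin n, ∃ i : Fin m, 0 < W i j ∧ ∀ i' < i, W i' j = 0)
    {α : Fin n →₀ ℕ} (hα : wdeg W α = 0) : α = 0 := by
  rcases lex_sum_key hW (fun j => α j) Finset.univ with hall | hpos
  · ext j
    exact hall j (Finset.mem_univ j)
  · exfalso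
    rw [← wdeg_sum, hα] at hpos
    exact lt_irrefl _ hpos

end pos

/-! ### Homogeneous components of ideal elements -/

section idealcomp
variable {K : Type*} [Field K] {m n s : ℕ}

lemma comp_mem_span (w : Fin n → (Fin m → ℤ)) (g : Fin s → MvPolynomial (Fin n) K)
    (d : Fin s → Fin m → ℤ) (hgh : ∀ k, (g k).IsWeightedHomogeneous w (d k))
    {a : MvPolynomial (Fin n) K} (ha : a ∈ Ideal.span (Set.range g)) (e : Fin m → ℤ) :
    weightedHomogeneousComponent w e a ∈ Ideal.span (Set.range g) := by
  obtain ⟨c, rfl⟩ := Ideal.mem_span_range_iff_exists_fun.mp ha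
  rw [map_sum]
  apply Ideal.sum_mem
  intro k _
  rw [wcomp_mul w (hgh k) (c k) e]
  exact Ideal.mul_mem_left _ _ (Ideal.subset_span ⟨k, rfl⟩)

end idealcomp

/-- Extending a truncated Gröbner basis by one element: if `g_1,…,g_s` form a `D`-truncated
`σ`-Gröbner basis of `I` and `h` is a nonzero `W`-homogeneous polynomial of `W`-degree
exactly `D` whose leading term is not divisible by any leading term of the `g_k`, then
`g_1,…,g_s,h` form a `D`-truncated `σ`-Gröbner basis of `I + (h)`. -/
theorem stmt_9 {K : Type*} [Field K] {m n s : ℕ} (W : Matrix (Fin m) (Fin n) ℤ)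
    (hW : PositiveGrading W) (σ : MonomialOrder (Fin n))
    (g : Fin s → MvPolynomial (Fin n) K) (hg0 : ∀ k, g k ≠ 0)
    (d : Fin s → Fin m → ℤ) (hgh : ∀ k, IsWHomogeneous W (g k) (d k))
    (D : Fin m → ℤ)
    (htrunc : ∀ v ∈ Ideal.span (Set.range g), v ≠ 0 →
      ∀ e : Fin m → ℤ, IsWHomogeneous W v e → toLex e ≤ toLex D →
      ∃ k, toLex (d k) ≤ toLex D ∧ mdeg σ (g k) ≤ mdeg σ v)
    (h : MvPolynomial (Fin n) K) (hh0 : h ≠ 0) (hhhom : IsWHomogeneous W h D)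
    (hnotdiv : ∀ k, ¬ mdeg σ (g k) ≤ mdeg σ h) :
    ∀ v ∈ Ideal.span (Set.range g) ⊔ Ideal.span {h}, v ≠ 0 →
      ∀ e : Fin m → ℤ, IsWHomogeneous W v e → toLex e ≤ toLex D →
      (∃ k, toLex (d k) ≤ toLex D ∧ mdeg σ (g k) ≤ mdeg σ v) ∨
        mdeg σ h ≤ mdeg σ v := by
  classical
  obtain ⟨hW1, hW2, hW3⟩ := hW
  set w : Fin n → (Fin m → ℤ) := fun j => fun i => W i j with hw
  -- translation between the two notions of homogeneity
  have hhom_iff : ∀ (p : MvPolynomial (Fin n) K) (e : Fin m → ℤ),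
      IsWHomogeneous W p e ↔ p.IsWeightedHomogeneous w e := by
    intro p e
    constructor
    · intro hp δ hδ
      rw [← wdeg_eq]
      exact hp δ (mem_support_iff.mpr hδ)
    · intro hp δ hδ
      rw [wdeg_eq]
      exact hp (mem_support_iff.mp hδ)
  intro v hv hv0 e hve heD
  obtain ⟨a, ha, b, hb, rfl⟩ := Submodule.mem_sup.mp hv
  obtain ⟨q, rfl⟩ := Ideal.mem_span_singleton'.mp hb
  set a' := weightedHomogeneousComponent w e a with ha'def
  set q' := weightedHomogeneousComponent w (e - D) q with hq'def
  have hwhom : (a + q * h).IsWeightedHomogeneous w e := (hhom_iff _ e).mp hve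
  have hhwhom : h.IsWeightedHomogeneous w D := (hhom_iff _ D).mp hhhom
  have hsplit : a + q * h = a' + q' * h := by
    conv_lhs => rw [← hwhom.weightedHomogeneousComponent_same]
    rw [map_add, wcomp_mul w hhwhom q e]
  have ha'mem : a' ∈ Ideal.span (Set.range g) :=
    comp_mem_span w g d (fun k => (hhom_iff _ _).mp (hgh k)) ha e
  have ha'hom : IsWHomogeneous W a' e :=
    (hhom_iff _ e).mpr (weightedHomogeneousComponent_isWeightedHomogeneous e a)
  by_cases hq'h : q' * h = 0
  · -- the `h`-part vanishes: `v = a' ∈ I`, use the truncated GB property directly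
    have hva' : a + q * h = a' := by rw [hsplit, hq'h, add_zero]
    have ha'0 : a' ≠ 0 := hva' ▸ hv0
    obtain ⟨k, hk1, hk2⟩ := htrunc a' ha'mem ha'0 e ha'hom heD
    left
    exact ⟨k, hk1, by rw [hva']; exact hk2⟩
  · -- the `h`-part survives: then `e = D` and `q'` is a nonzero constant
    have hq'0 : q' ≠ 0 := fun hc => hq'h (by rw [hc, zero_mul])
    have hq'hom : q'.IsWeightedHomogeneous w (e - D) :=
      weightedHomogeneousComponent_isWeightedHomogeneous (e - D) q
    -- pick a monomial of q' to see that e - D has nonnegative lex degree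
    obtain ⟨α, hα⟩ := support_nonempty.mpr hq'0
    have hαdeg : wdeg W α = e - D := by
      rw [wdeg_eq]
      exact hq'hom (mem_support_iff.mp hα)
    have hDe : toLex D ≤ toLex e := by
      have h1 := wdeg_lex_nonneg hW3 α
      rw [hαdeg] at h1
      have h2 := lex_add_le_add_left h1 D
      rw [add_zero, add_sub_cancel] at h2
      exact h2
    have heDeq : e = D := toLex.injective (le_antisymm heD hDe)
    -- every exponent in q' is zero, so q' is a constant
    have hq'supp : ∀ β ∈ q'.support, β = 0 := by
      intro β hβ
      apply wdeg_lex_eq_zero hW3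
      rw [wdeg_eq]
      rw [hq'def] at hβ
      have := hq'hom (mem_support_iff.mp hβ)
      rw [this, heDeq, sub_self]
    have hq'C : q' = C (coeff 0 q') := by
      ext β
      by_cases hβ : β = 0
      · subst hβ; simp
      · rw [coeff_C, if_neg (Ne.symm hβ)]
        by_contra hc
        exact hβ (hq'supp β (mem_support_iff.mpr hc))
    have hc0 : coeff 0 q' ≠ 0 := by
      intro hc
      apply hq'0
      rw [hq'C, hc, map_zero]
    have hmdegq'h : mdeg σ (q' * h) = mdeg σ h := by
      conv_lhs => rw [hq'C]
      exact mdeg_C_mul σ hc0 h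
    by_cases ha'0 : a' = 0
    · -- v = q' * h, leading term is that of h
      right
      have : a + q * h = q' * h := by rw [hsplit, ha'0, zero_add]
      rw [this, hmdegq'h]
    · obtain ⟨k, hk1, hk2⟩ := htrunc a' ha'mem ha'0 e ha'hom heD
      have hne : mdeg σ a' ≠ mdeg σ (q' * h) := by
        intro hc
        apply hnotdiv k
        rw [← hmdegq'h, ← hc]
        exact hk2
      rcases lt_trichotomy (σ.toSyn (mdeg σ (q' * h))) (σ.toSyn (mdeg σ a')) with hlt | heq | hgt
      · left
        refine ⟨k, hk1, ?_⟩
        rw [hsplit, mdeg_add_of_lt σ ha'0 hlt]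
        exact hk2
      · exact absurd (σ.toSyn.injective heq).symm hne
      · right
        rw [hsplit, add_comm a' (q' * h), mdeg_add_of_lt σ hq'h hgt, hmdegq'h]
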